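/- arXiv:1811.01455 — 3 statements merged into one kernel-verified Lean document; each statement's English description precedes it below -/
import Mathlib

section
/- For every k ∈ ℕ with k ≥ 1, all real numbers α₁, …, α_k and all real numbers x₁, …, x_k, the generalized Euler matrices satisfy 𝓔^{(α₁+α₂+⋯+α_k)}(x₁+x₂+⋯+x_k) = 𝓔^{(α₁)}(x₁)·𝓔^{(α₂)}(x₂)·⋯·𝓔^{(α_k)}(x_k). -/
noncomputable section

open Finset
open scoped ENNReal NNReal

lemma coeff_unique {u v : ℕ → ℝ} {f : ℝ → ℝ}
    (hu : ∀ z : ℝ, |z| < 1 → HasSum (fun n => u n * z ^ n) (f z))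
    (hv : ∀ z : ℝ, |z| < 1 → HasSum (fun n => v n * z ^ n) (f z)) : u = v := by
  have key : ∀ w : ℕ → ℝ, (∀ z : ℝ, |z| < 1 → HasSum (fun n => w n * z ^ n) (f z)) →
      HasFPowerSeriesAt f (FormalMultilinearSeries.ofScalars ℝ w) 0 := by
    intro w hw
    refine ⟨1/2, ?_, by norm_num, ?_⟩
    · have hs : Summable (fun n => ‖FormalMultilinearSeries.ofScalars ℝ w n‖ *
          ((1/2 : ℝ≥0) : ℝ) ^ n) := by
        have h2 := summable_abs_iff.mpr (hw (1/2)
          (by rw [abs_of_nonneg (by norm_num : (0:ℝ) ≤ 1/2)]; norm_num)).summable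
        refine h2.congr fun n => ?_
        rw [FormalMultilinearSeries.ofScalars_norm, abs_mul, abs_pow,
          abs_of_nonneg (by norm_num : (0:ℝ) ≤ 1/2)]
        push_cast; norm_num
      have := FormalMultilinearSeries.le_radius_of_summable _ hs
      refine le_trans (le_of_eq ?_) this
      simp
    · intro y hy
      rw [EMetric.mem_ball, edist_zero_right] at hy
      have hy1 : |y| < 1 := by
        rw [show (1/2 : ℝ≥0∞) = ((1/2 : ℝ≥0) : ℝ≥0∞) by simp] at hy
        rw [enorm_eq_nnnorm, ENNReal.coe_lt_coe] at hy
        have : ‖y‖ < ((1/2 : ℝ≥0) : ℝ) := hy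
        rw [Real.norm_eq_abs] at this
        refine this.trans ?_
        push_cast; norm_num
      rw [zero_add]
      exact (hw y hy1).congr_fun fun n => by
        rw [FormalMultilinearSeries.ofScalars_apply_eq, smul_eq_mul]
  exact FormalMultilinearSeries.ofScalars_series_injective ℝ ℝ
    ((key u hu).eq_formalMultilinearSeries (key v hv))

def IsGenEulerFamily (E : ℝ → ℝ → ℕ → ℝ) : Prop :=
  ∀ α x z : ℝ, |z| < Real.pi →
    HasSum (fun k : ℕ => E α x k * z ^ k / (Nat.factorial k : ℝ))
      ((2 / (Real.exp z + 1)) ^ α * Real.exp (x * z))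

lemma euler_add_coeff {E : ℝ → ℝ → ℕ → ℝ} (hE : IsGenEulerFamily E)
    (α β x y : ℝ) (m : ℕ) :
    E (α + β) (x + y) m
      = ∑ j ∈ range (m + 1), (Nat.choose m j : ℝ) * E α x j * E β y (m - j) := by
  have hpi : (1 : ℝ) < Real.pi := by linarith [Real.pi_gt_three]
  set f : ℝ → ℝ := fun z => (2 / (Real.exp z + 1)) ^ (α + β) * Real.exp ((x + y) * z) with hf
  have hu : ∀ z : ℝ, |z| < 1 →
      HasSum (fun n => (E (α + β) (x + y) n / (Nat.factorial n : ℝ)) * z ^ n) (f z) := by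
    intro z hz
    exact (hE (α + β) (x + y) z (hz.trans hpi)).congr_fun fun n => by ring
  have hv : ∀ z : ℝ, |z| < 1 →
      HasSum (fun n => ((∑ j ∈ range (n + 1),
          (Nat.choose n j : ℝ) * E α x j * E β y (n - j)) / (Nat.factorial n : ℝ)) * z ^ n)
        (f z) := by
    intro z hz
    have hz' : |z| < Real.pi := hz.trans hpi
    have ha := hE α x z hz'
    have hb := hE β y z hz'
    set a : ℕ → ℝ := fun n => E α x n * z ^ n / (Nat.factorial n : ℝ)
    set b : ℕ → ℝ := fun n => E β y n * z ^ n / (Nat.factorial n : ℝ)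
    have hna : Summable fun n => ‖a n‖ := summable_norm_iff.mpr ha.summable
    have hnb : Summable fun n => ‖b n‖ := summable_norm_iff.mpr hb.summable
    have hsum : Summable fun n => ∑ kl ∈ Finset.HasAntidiagonal.antidiagonal n, a kl.1 * b kl.2 :=
      (summable_norm_sum_mul_antidiagonal_of_summable_norm hna hnb).of_norm
    have htsum : f z = ∑' n, ∑ kl ∈ Finset.HasAntidiagonal.antidiagonal n, a kl.1 * b kl.2 := by
      rw [← tsum_mul_tsum_eq_tsum_sum_antidiagonal_of_summable_norm hna hnb,
        ha.tsum_eq, hb.tsum_eq, hf]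
      have h2 : (0:ℝ) < 2 / (Real.exp z + 1) := by positivity
      show (2 / (Real.exp z + 1)) ^ (α + β) * Real.exp ((x + y) * z) = _
      rw [Real.rpow_add h2]
      rw [show (x + y) * z = x * z + y * z by ring, Real.exp_add]
      ring
    have := htsum ▸ hsum.hasSum
    refine this.congr_fun fun n => ?_
    rw [Finset.Nat.sum_antidiagonal_eq_sum_range_succ_mk]
    rw [Finset.sum_div, Finset.sum_mul]
    refine Finset.sum_congr rfl fun j hj => ?_
    have hjn : j ≤ n := by
      simpa using Nat.lt_succ_iff.mp (Finset.mem_range.mp hj)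
    show _ = a j * b (n - j)
    simp only [a, b]
    rw [Nat.cast_choose ℝ hjn]
    have hzpow : z ^ j * z ^ (n - j) = z ^ n := by
      rw [← pow_add, Nat.add_sub_cancel' hjn]
    field_simp
    rw [← hzpow]
    ring
  have := congrFun (coeff_unique hu hv) m
  field_simp at this
  exact this

def genEulerMatrix (E : ℝ → ℝ → ℕ → ℝ) (n : ℕ) (α x : ℝ) :
    Matrix (Fin (n + 1)) (Fin (n + 1)) ℝ :=
  Matrix.of fun i j => (Nat.choose (i : ℕ) (j : ℕ) : ℝ) * E α x ((i : ℕ) - (j : ℕ))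

lemma genEulerMatrix_mul {E : ℝ → ℝ → ℕ → ℝ} (hE : IsGenEulerFamily E)
    (n : ℕ) (α β x y : ℝ) :
    genEulerMatrix E n (α + β) (x + y) = genEulerMatrix E n α x * genEulerMatrix E n β y := by
  ext i j
  rw [Matrix.mul_apply]
  simp only [genEulerMatrix, Matrix.of_apply]
  rw [Fin.sum_univ_eq_sum_range
    (fun l => (Nat.choose (i : ℕ) l : ℝ) * E α x ((i : ℕ) - l) *
      ((Nat.choose l (j : ℕ) : ℝ) * E β y (l - (j : ℕ))))]
  set a := (i : ℕ); set b := (j : ℕ)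
  have ha : a ≤ n := Nat.lt_succ_iff.mp i.isLt
  by_cases hba : b ≤ a
  · -- restrict sum to Icc b a
    have hsub : Finset.Icc b a ⊆ Finset.range (n + 1) := by
      intro l hl
      rw [Finset.mem_range, Nat.lt_succ_iff]
      exact le_trans (Finset.mem_Icc.mp hl).2 ha
    rw [← Finset.sum_subset hsub (fun l hl hnotin => ?_)]
    · rw [← Finset.Ico_add_one_right_eq_Icc, Finset.sum_Ico_eq_sum_range]
      rw [euler_add_coeff hE α β x y (a - b), Finset.mul_sum]
      rw [show a + 1 - b = a - b + 1 by omega]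
      rw [← Finset.sum_range_reflect (fun t => (Nat.choose a b : ℝ) *
        ((Nat.choose (a - b) t : ℝ) * E α x t * E β y (a - b - t))) (a - b + 1)]
      refine Finset.sum_congr rfl fun t ht => ?_
      have htab : t ≤ a - b := Nat.lt_succ_iff.mp (Finset.mem_range.mp ht)
      have h1 : a - b + 1 - 1 - t = a - b - t := by omega
      have h2 : a - b - (a - b - t) = t := by omega
      have h3 : a - (b + t) = a - b - t := by omega
      have h4 : b + t - b = t := by omega
      have h5 : (Nat.choose a (b + t) : ℝ) * (Nat.choose (b + t) b : ℝ)
          = (Nat.choose a b : ℝ) * (Nat.choose (a - b) t : ℝ) := by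
        rw [← Nat.cast_mul, ← Nat.cast_mul, Nat.choose_mul (by omega), h4]
      have h6 : (a - b).choose (a - b - t) = (a - b).choose t := by
        rw [← Nat.choose_symm htab]
      rw [h1, h2, h3, h4, h6]
      linear_combination (-(E α x (a - b - t) * E β y t)) * h5
    · -- terms outside Icc b a vanish
      rcases le_or_gt l a with hla | hla
      · have : l < b := by
          rcases Finset.mem_range.mp hl with _
          by_contra hc
          exact hnotin (Finset.mem_Icc.mpr ⟨le_of_not_gt hc, hla⟩)
        rw [Nat.choose_eq_zero_of_lt this]
        simp
      · rw [Nat.choose_eq_zero_of_lt hla]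
        simp
  · -- a < b : both sides zero
    rw [Nat.choose_eq_zero_of_lt (by omega : a < b), Nat.cast_zero, zero_mul]
    symm
    refine Finset.sum_eq_zero fun l _ => ?_
    rcases le_or_gt l a with hla | hla
    · rw [Nat.choose_eq_zero_of_lt (by omega : l < b)]
      simp
    · rw [Nat.choose_eq_zero_of_lt hla]
      simp

theorem euler_matrix_product_formula (E : ℝ → ℝ → ℕ → ℝ) (hE : IsGenEulerFamily E)
    (n : ℕ) (k : ℕ) (hk : 1 ≤ k) (α x : Fin k → ℝ) :
    genEulerMatrix E n (∑ i, α i) (∑ i, x i)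
      = (List.ofFn fun i : Fin k => genEulerMatrix E n (α i) (x i)).prod := by
  induction k with
  | zero => omega
  | succ k ih =>
    rcases Nat.eq_zero_or_pos k with rfl | hk'
    · simp [List.ofFn_succ]
    · rw [Fin.sum_univ_succ α, Fin.sum_univ_succ x, List.ofFn_succ, List.prod_cons]
      rw [genEulerMatrix_mul hE, ih hk' (fun i => α i.succ) (fun i => x i.succ)]
end
end

section
/- For all real numbers α, x, y, the generalized Euler matrix satisfies 𝓔^{(α)}(x+y) = 𝓔^{(α)}(x)·P[y] = P[x]·𝓔^{(α)}(y) = 𝓔^{(α)}(y)·P[x]. In particular: 𝓔(x+y) = P[x]·𝓔(y) = P[y]·𝓔(x), 𝓔(x) = P[x]·𝓔, 𝓔(x + 1/2) = P[x]·𝔈, and 𝓔 = P[−1/2]·𝔈. -/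
noncomputable section

/-- The generalized Pascal matrix of the first kind `P[x]`. -/
def pascalMatrix (n : ℕ) (x : ℝ) : Matrix (Fin (n + 1)) (Fin (n + 1)) ℝ :=
  Matrix.of fun i j => (Nat.choose (i : ℕ) (j : ℕ) : ℝ) * x ^ ((i : ℕ) - (j : ℕ))

/-- Uniqueness of power-series coefficients on the unit ball. -/
lemma coeff_unique_aux {a b : ℕ → ℝ} {f : ℝ → ℝ}
    (ha : ∀ z : ℝ, |z| ≤ 1 → HasSum (fun k => a k * z ^ k) (f z))
    (hb : ∀ z : ℝ, |z| ≤ 1 → HasSum (fun k => b k * z ^ k) (f z)) : a = b := by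
  have build : ∀ (c : ℕ → ℝ), (∀ z : ℝ, |z| ≤ 1 → HasSum (fun k => c k * z ^ k) (f z)) →
      HasFPowerSeriesOnBall f (FormalMultilinearSeries.ofScalars ℝ c) 0 1 := by
    intro c hc
    refine ⟨?_, one_pos, ?_⟩
    · refine (FormalMultilinearSeries.ofScalars ℝ c).le_radius_of_summable (r := 1) ?_
      simp only [FormalMultilinearSeries.ofScalars_norm, NNReal.coe_one, one_pow, mul_one]
      have := (hc 1 (by norm_num)).summable
      simp only [one_pow, mul_one] at this
      simpa [Real.norm_eq_abs] using this.abs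
    · intro y hy
      rw [mem_emetric_ball_zero_iff] at hy
      have hy' : |y| ≤ 1 := by
        have : ‖y‖₊ < 1 := by exact_mod_cast (show (‖y‖₊ : ENNReal) < 1 from hy)
        have : ‖y‖ < 1 := this
        rw [Real.norm_eq_abs] at this
        exact this.le
      simp only [FormalMultilinearSeries.ofScalars_apply_eq, smul_eq_mul, zero_add]
      exact hc y hy'
  exact FormalMultilinearSeries.ofScalars_series_injective ℝ ℝ
    (((build a ha).hasFPowerSeriesAt).eq_formalMultilinearSeries ((build b hb).hasFPowerSeriesAt))

lemma euler_add (E : ℝ → ℝ → ℕ → ℝ) (hE : IsGenEulerFamily E) (α x y : ℝ) (k : ℕ) :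
    E α (x + y) k = ∑ j ∈ Finset.range (k + 1),
      (k.choose j : ℝ) * E α x j * y ^ (k - j) := by
  have hpi : (1 : ℝ) < Real.pi := by linarith [Real.pi_gt_three]
  set F : ℝ → ℝ := fun z => (2 / (Real.exp z + 1)) ^ α * Real.exp ((x + y) * z) with hF
  have ha : ∀ z : ℝ, |z| ≤ 1 →
      HasSum (fun m => (E α (x + y) m / (Nat.factorial m : ℝ)) * z ^ m) (F z) := by
    intro z hz
    have h := hE α (x + y) z (lt_of_le_of_lt hz hpi)
    simpa only [div_mul_eq_mul_div] using h
  have hb : ∀ z : ℝ, |z| ≤ 1 →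
      HasSum (fun m => ((∑ j ∈ Finset.range (m + 1),
        (m.choose j : ℝ) * E α x j * y ^ (m - j)) / (Nat.factorial m : ℝ)) * z ^ m) (F z) := by
    intro z hz
    have hz' := lt_of_le_of_lt hz hpi
    have hf := hE α x z hz'
    have hg : HasSum (fun m : ℕ => y ^ m * z ^ m / (Nat.factorial m : ℝ))
        (Real.exp (y * z)) := by
      have h := NormedSpace.expSeries_div_hasSum_exp (y * z)
      rw [← Real.exp_eq_exp_ℝ] at h
      simpa [mul_pow] using h
    have hnf : Summable fun j => ‖E α x j * z ^ j / (Nat.factorial j : ℝ)‖ := by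
      simp only [Real.norm_eq_abs]
      exact hf.summable.abs
    have hng : Summable fun m => ‖y ^ m * z ^ m / (Nat.factorial m : ℝ)‖ := by
      simp only [Real.norm_eq_abs]
      exact hg.summable.abs
    have hc := hasSum_sum_range_mul_of_summable_norm hnf hng
    rw [hf.tsum_eq, hg.tsum_eq] at hc
    have hval : (2 / (Real.exp z + 1)) ^ α * Real.exp (x * z) * Real.exp (y * z) = F z := by
      rw [hF, mul_assoc, ← Real.exp_add]
      ring_nf
    rw [hval] at hc
    have hterm : (fun m : ℕ => ((∑ j ∈ Finset.range (m + 1),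
        (m.choose j : ℝ) * E α x j * y ^ (m - j)) / (Nat.factorial m : ℝ)) * z ^ m)
        = fun m : ℕ => ∑ j ∈ Finset.range (m + 1),
          (E α x j * z ^ j / (Nat.factorial j : ℝ))
            * (y ^ (m - j) * z ^ (m - j) / (Nat.factorial (m - j) : ℝ)) := by
      funext m
      rw [Finset.sum_div, Finset.sum_mul]
      refine Finset.sum_congr rfl fun j hj => ?_
      have hjm : j ≤ m := Nat.lt_succ_iff.mp (Finset.mem_range.mp hj)
      have key : (m.choose j : ℝ) = (Nat.factorial m : ℝ)
          / ((Nat.factorial j : ℝ) * (Nat.factorial (m - j) : ℝ)) := by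
        rw [eq_div_iff (by positivity), ← mul_assoc]
        exact_mod_cast Nat.choose_mul_factorial_mul_factorial hjm
      have hzz : z ^ j * z ^ (m - j) = z ^ m := by
        rw [← pow_add, Nat.add_sub_cancel' hjm]
      rw [key, ← hzz]
      have h1 : (Nat.factorial j : ℝ) ≠ 0 := by positivity
      have h2 : (Nat.factorial (m - j) : ℝ) ≠ 0 := by positivity
      have h3 : (Nat.factorial m : ℝ) ≠ 0 := by positivity
      field_simp
    rw [hterm]
    exact hc
  have h := congrFun (coeff_unique_aux ha hb) k
  have hfac : (Nat.factorial k : ℝ) ≠ 0 := by positivity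
  rw [div_eq_div_iff hfac hfac] at h
  exact mul_right_cancel₀ hfac h

lemma euler_add' (E : ℝ → ℝ → ℕ → ℝ) (hE : IsGenEulerFamily E) (α x y : ℝ) (k : ℕ) :
    E α (x + y) k = ∑ m ∈ Finset.range (k + 1),
      (k.choose m : ℝ) * E α x (k - m) * y ^ m := by
  rw [euler_add E hE α x y k,
    ← Finset.sum_range_reflect (fun j => (k.choose j : ℝ) * E α x j * y ^ (k - j)) (k + 1)]
  refine Finset.sum_congr rfl fun m hm => ?_
  have hm' : m ≤ k := Nat.lt_succ_iff.mp (Finset.mem_range.mp hm)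
  simp only [Nat.add_sub_cancel]
  rw [Nat.choose_symm hm', Nat.sub_sub_self hm']

lemma key_sum (n I J : ℕ) (hI : I ≤ n) (F G : ℕ → ℝ) :
    ∑ l ∈ Finset.range (n + 1),
      (I.choose l : ℝ) * F (I - l) * ((l.choose J : ℝ) * G (l - J))
    = (I.choose J : ℝ) * ∑ m ∈ Finset.range (I - J + 1),
        ((I - J).choose m : ℝ) * F (I - J - m) * G m := by
  by_cases hJI : J ≤ I
  · have hsub : Finset.Ico J (I + 1) ⊆ Finset.range (n + 1) := by
      intro l hl
      simp only [Finset.mem_Ico] at hl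
      simp only [Finset.mem_range]
      omega
    rw [← Finset.sum_subset hsub (fun l hl hl' => ?_)]
    · rw [Finset.sum_Ico_eq_sum_range, show I + 1 - J = I - J + 1 by omega, Finset.mul_sum]
      refine Finset.sum_congr rfl fun m hm => ?_
      have hm' : m ≤ I - J := Nat.lt_succ_iff.mp (Finset.mem_range.mp hm)
      have h3 : I.choose (J + m) * (J + m).choose J = I.choose J * (I - J).choose m := by
        have h := Nat.choose_mul (n := I) (show J ≤ J + m by omega)
        simpa using h
      have h3' : (I.choose (J + m) : ℝ) * ((J + m).choose J : ℝ)
          = (I.choose J : ℝ) * ((I - J).choose m : ℝ) := by exact_mod_cast h3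
      rw [show I - (J + m) = I - J - m by omega, show J + m - J = m by omega]
      linear_combination (F (I - J - m) * G m) * h3'
    · simp only [Finset.mem_Ico, not_and, not_lt] at hl'
      by_cases h : l < J
      · rw [Nat.choose_eq_zero_of_lt h]; simp
      · rw [Nat.choose_eq_zero_of_lt (show I < l by omega)]; simp
  · rw [Nat.choose_eq_zero_of_lt (by omega), Nat.cast_zero, zero_mul]
    refine Finset.sum_eq_zero fun l hl => ?_
    by_cases h : l ≤ I
    · rw [Nat.choose_eq_zero_of_lt (show l < J by omega)]; simp
    · rw [Nat.choose_eq_zero_of_lt (show I < l by omega)]; simp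

lemma eulerRightMul (E : ℝ → ℝ → ℕ → ℝ) (hE : IsGenEulerFamily E) (n : ℕ) (α x y : ℝ) :
    genEulerMatrix E n α (x + y) = genEulerMatrix E n α x * pascalMatrix n y := by
  ext i j
  rw [Matrix.mul_apply]
  simp only [genEulerMatrix, pascalMatrix, Matrix.of_apply]
  rw [Fin.sum_univ_eq_sum_range (fun l => ((i : ℕ).choose l : ℝ) * E α x ((i : ℕ) - l)
    * ((l.choose (j : ℕ) : ℝ) * y ^ (l - (j : ℕ)))) (n + 1)]
  rw [key_sum n i j (Nat.lt_succ_iff.mp i.isLt) (E α x) (fun m => y ^ m)]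
  rw [← euler_add' E hE α x y ((i : ℕ) - (j : ℕ))]

lemma eulerLeftMul (E : ℝ → ℝ → ℕ → ℝ) (hE : IsGenEulerFamily E) (n : ℕ) (α x y : ℝ) :
    genEulerMatrix E n α (x + y) = pascalMatrix n x * genEulerMatrix E n α y := by
  ext i j
  rw [Matrix.mul_apply]
  simp only [genEulerMatrix, pascalMatrix, Matrix.of_apply]
  rw [Fin.sum_univ_eq_sum_range (fun l => ((i : ℕ).choose l : ℝ) * x ^ ((i : ℕ) - l)
    * ((l.choose (j : ℕ) : ℝ) * E α y (l - (j : ℕ)))) (n + 1)]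
  rw [key_sum n i j (Nat.lt_succ_iff.mp i.isLt) (fun m => x ^ m) (E α y)]
  congr 1
  rw [add_comm x y, euler_add E hE α y x ((i : ℕ) - (j : ℕ))]
  exact Finset.sum_congr rfl fun m _ => by ring

theorem euler_matrix_pascal (E : ℝ → ℝ → ℕ → ℝ) (hE : IsGenEulerFamily E)
    (n : ℕ) (α x y : ℝ) :
    genEulerMatrix E n α (x + y) = genEulerMatrix E n α x * pascalMatrix n y ∧
    genEulerMatrix E n α (x + y) = pascalMatrix n x * genEulerMatrix E n α y ∧
    genEulerMatrix E n α (x + y) = genEulerMatrix E n α y * pascalMatrix n x ∧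
    genEulerMatrix E n 1 (x + y) = pascalMatrix n x * genEulerMatrix E n 1 y ∧
    genEulerMatrix E n 1 (x + y) = pascalMatrix n y * genEulerMatrix E n 1 x ∧
    genEulerMatrix E n 1 x = pascalMatrix n x * genEulerMatrix E n 1 0 ∧
    genEulerMatrix E n 1 (x + 1 / 2) = pascalMatrix n x * genEulerMatrix E n 1 (1 / 2) ∧
    genEulerMatrix E n 1 0 = pascalMatrix n (-(1 / 2)) * genEulerMatrix E n 1 (1 / 2) := by
  refine ⟨eulerRightMul E hE n α x y, eulerLeftMul E hE n α x y, ?_, eulerLeftMul E hE n 1 x y,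
    ?_, ?_, eulerLeftMul E hE n 1 x (1 / 2), ?_⟩
  · rw [add_comm x y]; exact eulerRightMul E hE n α y x
  · rw [add_comm x y]; exact eulerLeftMul E hE n 1 y x
  · have h := eulerLeftMul E hE n 1 x 0
    rwa [add_zero] at h
  · have h := eulerLeftMul E hE n 1 (-(1 / 2)) (1 / 2)
    rwa [neg_add_cancel] at h
end
end

section
/- For all n, r ∈ ℕ with 0 ≤ r ≤ n, every real α and every real x, one has (−1)^n·C(n,r)·E^{(α)}_{n−r}(x) = (−1)^r·F_{n−r+1} + (−1)^{r+1}·[((r+1)(2x−α) + 2)/2]·F_{n−r} + Σ_{k=r+2}^{n} (−1)^k·C(k,r)·{E^{(α)}_{k−r}(x) + ((k−r)/k)·[E^{(α)}_{k−r−1}(x) − ((k−r−1)/(k−1))·E^{(α)}_{k−r−2}(x)]}·F_{n−k+1}. -/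
noncomputable section

lemma fib_expand (c : ℕ → ℝ) (m : ℕ) :
    c m = c 0 * (Nat.fib (m + 1) : ℝ) + (c 1 - c 0) * (Nat.fib m : ℝ)
      + ∑ j ∈ Finset.Icc 2 m, (c j - c (j - 1) - c (j - 2)) * (Nat.fib (m - j + 1) : ℝ) := by
  induction m using Nat.twoStepInduction with
  | zero => simp
  | one => norm_num [Nat.fib_add_two]
  | more m ih1 ih2 =>
    have hsplit : ∑ j ∈ Finset.Icc 2 (m + 2),
        (c j - c (j - 1) - c (j - 2)) * (Nat.fib (m + 2 - j + 1) : ℝ)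
        = ∑ j ∈ Finset.Icc 2 (m + 1),
            (c j - c (j - 1) - c (j - 2)) * (Nat.fib (m + 2 - j + 1) : ℝ)
          + (c (m + 2) - c (m + 1) - c m) * (Nat.fib 1 : ℝ) := by
      rw [Finset.sum_Icc_succ_top (by omega)]
      have h1 : m + 1 + 1 - 2 = m := by omega
      rw [h1]
      norm_num
    have hfib : ∀ j ∈ Finset.Icc 2 (m + 1),
        (c j - c (j - 1) - c (j - 2)) * (Nat.fib (m + 2 - j + 1) : ℝ)
          = (c j - c (j - 1) - c (j - 2)) * (Nat.fib (m + 1 - j + 1) : ℝ)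
            + (c j - c (j - 1) - c (j - 2)) * (Nat.fib (m + 1 - j) : ℝ) := by
      intro j hj
      simp only [Finset.mem_Icc] at hj
      have h1 : m + 2 - j + 1 = (m + 1 - j) + 2 := by omega
      have h2 : m + 1 - j + 1 = (m + 1 - j) + 1 := by omega
      rw [h1, h2, Nat.fib_add_two]
      push_cast
      ring
    have hsum2 : ∑ j ∈ Finset.Icc 2 (m + 1),
        (c j - c (j - 1) - c (j - 2)) * (Nat.fib (m + 1 - j) : ℝ)
        = ∑ j ∈ Finset.Icc 2 m, (c j - c (j - 1) - c (j - 2)) * (Nat.fib (m - j + 1) : ℝ) := by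
      rcases Nat.eq_zero_or_pos m with rfl | hm
      · simp
      rw [Finset.sum_Icc_succ_top (by omega)]
      simp only [Nat.sub_self, Nat.fib_zero, Nat.cast_zero, mul_zero, add_zero]
      apply Finset.sum_congr rfl
      intro j hj
      simp only [Finset.mem_Icc] at hj
      have : m + 1 - j = m - j + 1 := by omega
      rw [this]
    rw [hsplit, Finset.sum_congr rfl hfib, Finset.sum_add_distrib, hsum2]
    have hf1 : (Nat.fib (m + 2 + 1) : ℝ) = Nat.fib (m + 2) + Nat.fib (m + 1) := by
      rw [show m + 2 + 1 = (m + 1) + 2 by ring, Nat.fib_add_two]; push_cast; ring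
    have hf2 : (Nat.fib (m + 2) : ℝ) = Nat.fib (m + 1) + Nat.fib m := by
      rw [Nat.fib_add_two]; push_cast; ring
    rw [hf1, hf2]
    have hs1 : ∑ j ∈ Finset.Icc 2 (m + 1),
        (c j - c (j - 1) - c (j - 2)) * (Nat.fib (m + 1 - j + 1) : ℝ)
        = c (m + 1) - (c 0 * (Nat.fib (m + 1 + 1) : ℝ) + (c 1 - c 0) * (Nat.fib (m + 1) : ℝ)) := by
      rw [ih2]; ring
    have hs2 : ∑ j ∈ Finset.Icc 2 m,
        (c j - c (j - 1) - c (j - 2)) * (Nat.fib (m - j + 1) : ℝ)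
        = c m - (c 0 * (Nat.fib (m + 1) : ℝ) + (c 1 - c 0) * (Nat.fib m : ℝ)) := by
      rw [ih1]; ring
    rw [hs1, hs2]
    have hf3 : (Nat.fib (m + 1 + 1) : ℝ) = Nat.fib (m + 1) + Nat.fib m := by
      rw [Nat.fib_add_two]; push_cast; ring
    rw [hf3]
    simp [Nat.fib_one]
    ring

lemma myE0 (E : ℝ → ℝ → ℕ → ℝ) (hE : IsGenEulerFamily E) (α x : ℝ) : E α x 0 = 1 := by
  have h := hE α x 0 (by simpa using Real.pi_pos)
  have h2 : HasSum (fun k : ℕ => E α x k * (0:ℝ) ^ k / (Nat.factorial k : ℝ))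
      (E α x 0 * (0:ℝ) ^ 0 / (Nat.factorial 0 : ℝ)) := by
    apply hasSum_single
    intro b hb
    simp [zero_pow hb]
  have := h2.unique h
  simp only [pow_zero, Nat.factorial_zero, Nat.cast_one, mul_one, div_one] at this
  rw [this]
  rw [Real.exp_zero, mul_zero, Real.exp_zero]
  norm_num

lemma myE1 (E : ℝ → ℝ → ℕ → ℝ) (hE : IsGenEulerFamily E) (α x : ℝ) :
    E α x 1 = x - α / 2 := by
  set f : ℝ → ℝ := fun z => (2 / (Real.exp z + 1)) ^ α * Real.exp (x * z) with hf
  set c : ℕ → ℝ := fun k => E α x k / (Nat.factorial k : ℝ) with hc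
  set p := FormalMultilinearSeries.ofScalars ℝ c with hp
  have hball : HasFPowerSeriesOnBall f p 0 1 := by
    refine ⟨?_, one_pos, ?_⟩
    · have hs : Summable fun k : ℕ => E α x k * (1:ℝ) ^ k / (Nat.factorial k : ℝ) :=
        (hE α x 1 (by rw [abs_one]; linarith [Real.pi_gt_three])).summable
      have hs' : Summable fun k : ℕ => ‖c k‖ := by
        rw [summable_norm_iff]
        simpa [hc] using hs
      have := p.le_radius_of_summable (r := 1) (by
        simp only [hp, FormalMultilinearSeries.ofScalars_norm, NNReal.coe_one, one_pow, mul_one]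
        exact hs')
      simpa using this
    · intro y hy
      have hy' : |y| < Real.pi := by
        rw [EMetric.mem_ball, edist_dist, dist_zero_right] at hy
        have : ‖y‖ < 1 := by
          rwa [ENNReal.ofReal_lt_one] at hy
        calc |y| < 1 := this
        _ < Real.pi := by linarith [Real.pi_gt_three]
      have := hE α x y hy'
      rw [zero_add]
      convert this using 2 with k
      · rfl
      rw [hp, FormalMultilinearSeries.ofScalars_apply_eq]
      simp [hc]
      ring
  have hat := hball.hasFPowerSeriesAt
  have hderiv : deriv f 0 = E α x 1 := by
    rw [hat.deriv, hp, FormalMultilinearSeries.ofScalars_apply_eq]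
    simp [hc]
  -- compute deriv f 0 directly
  have he : HasDerivAt (fun z : ℝ => Real.exp z + 1) 1 0 := by
    simpa using (Real.hasDerivAt_exp 0).add_const 1
  have hdiv : HasDerivAt (fun z : ℝ => 2 / (Real.exp z + 1)) (-(1/2)) 0 := by
    have := (hasDerivAt_const (0:ℝ) (2:ℝ)).div he (by positivity)
    refine this.congr_deriv ?_
    simp [Real.exp_zero]
    norm_num
  have hrpow : HasDerivAt (fun z : ℝ => (2 / (Real.exp z + 1)) ^ α)
      (-(1/2) * α * (2 / (Real.exp 0 + 1)) ^ (α - 1)) 0 :=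
    hdiv.rpow_const (Or.inl (by rw [Real.exp_zero]; norm_num))
  have hexp : HasDerivAt (fun z : ℝ => Real.exp (x * z)) x 0 := by
    have h1 : HasDerivAt (fun z : ℝ => x * z) x 0 := by
      simpa using (hasDerivAt_id (0:ℝ)).const_mul x
    simpa using h1.exp
  have hmul := hrpow.mul hexp
  have : deriv f 0 = x - α / 2 := by
    rw [HasDerivAt.deriv (f := f) hmul]
    rw [Real.exp_zero]
    norm_num
    ring
  rw [← hderiv, this]

theorem euler_fibonacci_alternating_identity (E : ℝ → ℝ → ℕ → ℝ)
    (hE : IsGenEulerFamily E) (n r : ℕ) (hrn : r ≤ n) (α x : ℝ) :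
    (-1 : ℝ) ^ n * (Nat.choose n r : ℝ) * E α x (n - r)
      = (-1 : ℝ) ^ r * (Nat.fib (n - r + 1) : ℝ)
        + (-1 : ℝ) ^ (r + 1) * ((((r : ℝ) + 1) * (2 * x - α) + 2) / 2) *
            (Nat.fib (n - r) : ℝ)
        + ∑ k ∈ Finset.Icc (r + 2) n,
            (-1 : ℝ) ^ k * (Nat.choose k r : ℝ) *
              (E α x (k - r)
                + ((k : ℝ) - r) / k *
                  (E α x (k - r - 1)
                    - ((k : ℝ) - r - 1) / ((k : ℝ) - 1) * E α x (k - r - 2))) *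
              (Nat.fib (n - k + 1) : ℝ) := by
  set b : ℕ → ℝ := fun k => (-1 : ℝ) ^ k * (Nat.choose k r : ℝ) * E α x (k - r) with hb
  have key := fib_expand (fun j => b (r + j)) (n - r)
  simp only [Nat.add_zero] at key
  rw [show r + (n - r) = n by omega] at key
  -- identify the three pieces
  have h0 : b r = (-1 : ℝ) ^ r := by
    simp [hb, Nat.choose_self, myE0 E hE]
  have h1 : b (r + 1) - b r
      = (-1 : ℝ) ^ (r + 1) * ((((r : ℝ) + 1) * (2 * x - α) + 2) / 2) := by
    have : (r + 1) - r = 1 := by omega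
    simp only [hb, this, Nat.sub_self, Nat.choose_succ_self_right, Nat.choose_self,
      myE1 E hE, myE0 E hE, h0]
    rw [pow_succ]
    push_cast
    ring
  have hsum : ∑ j ∈ Finset.Icc 2 (n - r),
      (b (r + j) - b (r + (j - 1)) - b (r + (j - 2))) * (Nat.fib (n - r - j + 1) : ℝ)
      = ∑ k ∈ Finset.Icc (r + 2) n,
          (-1 : ℝ) ^ k * (Nat.choose k r : ℝ) *
            (E α x (k - r)
              + ((k : ℝ) - r) / k *
                (E α x (k - r - 1)
                  - ((k : ℝ) - r - 1) / ((k : ℝ) - 1) * E α x (k - r - 2))) *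
            (Nat.fib (n - k + 1) : ℝ) := by
    rw [show r + 2 = r + 2 by rfl, show (Finset.Icc (r+2) n) =
        (Finset.Icc 2 (n-r)).map (addLeftEmbedding r) by
      rw [Finset.map_add_left_Icc]
      congr 1
      omega]
    rw [Finset.sum_map]
    apply Finset.sum_congr rfl
    intro j hj
    simp only [Finset.mem_Icc] at hj
    obtain ⟨i, rfl⟩ : ∃ i, j = i + 2 := ⟨j - 2, by omega⟩
    simp only [addLeftEmbedding_apply]
    have hidx1 : r + (i + 2) - r = i + 2 := by omega
    have hidx2 : r + (i + 2) - r - 1 = i + 1 := by omega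
    have hidx3 : r + (i + 2) - r - 2 = i := by omega
    have hidx4 : r + (i + 2 - 1) = r + i + 1 := by omega
    have hidx5 : r + (i + 2 - 2) = r + i := by omega
    have hidx6 : r + i + 1 - r = i + 1 := by omega
    have hidx7 : r + i - r = i := by omega
    have hidx8 : n - r - (i + 2) + 1 = n - (r + (i + 2)) + 1 := by omega
    rw [hidx8]
    simp only [hb, hidx1, hidx2, hidx3, hidx4, hidx5, hidx6, hidx7]
    have hA : ((r + i + 2).choose r : ℝ) * ((i : ℝ) + 2)
        = ((r + i + 1).choose r : ℝ) * ((r : ℝ) + i + 2) := by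
      have h := Nat.choose_mul_succ_eq (r + i + 1) r
      rw [show r + i + 1 + 1 = r + i + 2 from rfl, show r + i + 2 - r = i + 2 by omega] at h
      exact_mod_cast h.symm
    have hB : ((r + i + 1).choose r : ℝ) * ((i : ℝ) + 1)
        = ((r + i).choose r : ℝ) * ((r : ℝ) + i + 1) := by
      have h := Nat.choose_mul_succ_eq (r + i) r
      rw [show r + i + 1 - r = i + 1 by omega] at h
      exact_mod_cast h.symm
    have hc1 : ((r : ℝ) + i + 2) ≠ 0 := by positivity
    have hc2 : ((r : ℝ) + i + 1) ≠ 0 := by positivity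
    have hcast : ((r + (i + 2) : ℕ) : ℝ) = (r : ℝ) + i + 2 := by push_cast; ring
    rw [show r + (i + 2) = r + i + 2 by omega]
    push_cast
    rw [show ((-1 : ℝ)) ^ (r + i + 2) = (-1 : ℝ) ^ (r + i) * 1 by rw [pow_add]; norm_num,
      show ((-1 : ℝ)) ^ (r + i + 1) = (-1 : ℝ) ^ (r + i) * (-1) by rw [pow_add]; norm_num]
    have hq1 : ((i : ℝ) + 2) / ((r : ℝ) + i + 2) * ((r + i + 2).choose r : ℝ)
        = ((r + i + 1).choose r : ℝ) := by
      field_simp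
      linarith [hA]
    have hq2 : ((i : ℝ) + 1) / ((r : ℝ) + i + 1) * ((r + i + 1).choose r : ℝ)
        = ((r + i).choose r : ℝ) := by
      field_simp
      linarith [hB]
    set s := (-1 : ℝ) ^ (r + i) with hs
    set F := (Nat.fib (n - (r + i + 2) + 1) : ℝ) with hF
    linear_combination (s * F * E α x i * (((i : ℝ) + 1) / ((r : ℝ) + i + 1))
        - s * F * E α x (i + 1)) * hq1
      + s * F * E α x i * hq2
  rw [hsum, h1, h0] at key
  simpa [hb] using key
end
end
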